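/- Let g be a compact Lie algebra with Ad-invariant inner product, h a subalgebra, v = h^⊥, and suppose the G-invariant metric determined by positive definite Ad_H-equivariant I : v → v is a g.o. metric, i.e. for every X ∈ v there exists F ∈ h with ([X+F, Y]_v, IX) = 0 for all Y ∈ v, where (·,·) = ⟨I·,·⟩. If this holds for the operator I, then it also holds when I is replaced by I restricted-rescaled along invariant summands in the following special case: if g = h ⊕ l ⊕ m with k = h ⊕ l a subalgebra and I_λ = λ·Id_l ⊕ Id_m defines a g.o. metric for one value λ ≠ 1, λ > 0, then I_λ defines a g.o. metric for every λ > 0. -/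

import Mathlib

/-- Compact semisimple `g`, `B = −Killing`, chain of subalgebras
`h ⊆ k ⊆ g`, orthogonal decompositions `g = h ⊕ l ⊕ m`, `k = h ⊕ l`,
`v = l ⊕ m = h^⊥`.  The metric `ds²_λ` is given on `v` by
`(x, y)_λ = λ B x_l y_l + B x_m y_m`.  By the Geodesic Lemma, `ds²_λ` is a g.o.
metric iff for every `X ∈ v` there is `F ∈ h` such that for all `Y ∈ v`, writing
`⁅X + F, Y⁆ = z_h + z_l + z_m` (`z_h ∈ h`, `z_l ∈ l`, `z_m ∈ m`), one has
`λ B z_l X + B z_m X = 0` (this is `(⁅X+F, Y⁆_v, X)_λ = 0`).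
**Claim:** if `ds²_λ₀` is a g.o. metric for a single `λ₀ > 0`, `λ₀ ≠ 1`, then
`ds²_λ` is a g.o. metric for every `λ > 0`. -/
theorem stmt13 {g : Type*} [LieRing g] [LieAlgebra ℝ g] [FiniteDimensional ℝ g]
    [LieAlgebra.IsSemisimple ℝ g]
    (B : LinearMap.BilinForm ℝ g)
    (hkill : ∀ x y : g, B x y = -(killingForm ℝ g x y))
    (hpos : ∀ x : g, x ≠ 0 → 0 < B x x)
    (h k : LieSubalgebra ℝ g) (hhk : h ≤ k)
    (l m V : Submodule ℝ g)
    (hl : l = k.toSubmodule ⊓ B.orthogonal h.toSubmodule)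
    (hm : m = B.orthogonal k.toSubmodule)
    (hV : V = B.orthogonal h.toSubmodule)
    (lam0 : ℝ) (hlam0 : 0 < lam0) (hlam0ne : lam0 ≠ 1)
    (hGO0 : ∀ X ∈ V, ∃ F ∈ h, ∀ Y ∈ V,
      ∀ zh ∈ h.toSubmodule, ∀ zl ∈ l, ∀ zm ∈ m,
        ⁅X + F, Y⁆ = zh + zl + zm → lam0 * B zl X + B zm X = 0) :
    ∀ lam : ℝ, 0 < lam →
      ∀ X ∈ V, ∃ F ∈ h, ∀ Y ∈ V,
        ∀ zh ∈ h.toSubmodule, ∀ zl ∈ l, ∀ zm ∈ m,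
          ⁅X + F, Y⁆ = zh + zl + zm → lam * B zl X + B zm X = 0 := by
  -- Basic properties of B
  have hsymm : ∀ x y : g, B x y = B y x := by
    intro x y
    rw [hkill, hkill, LieModule.traceForm_comm]
  have hanis : ∀ x : g, B x x = 0 → x = 0 := by
    intro x hx
    by_contra hne
    exact absurd hx (ne_of_gt (hpos x hne))
  -- invariance: B ⁅u,v⁆ w = - B v ⁅u,w⁆
  have hinv : ∀ u v w : g, B ⁅u, v⁆ w = -B v ⁅u, w⁆ := by
    intro u v w
    have h1 : killingForm ℝ g ⁅v, u⁆ w = killingForm ℝ g v ⁅u, w⁆ :=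
      LieModule.traceForm_apply_lie_apply ℝ g g v u w
    have h2 : (⁅u, v⁆ : g) = -⁅v, u⁆ := by rw [← lie_skew]
    rw [hkill, hkill, h2, map_neg, LinearMap.neg_apply, h1]
  have hrefl : B.IsRefl := by
    intro x y hxy
    rw [hsymm]; exact hxy
  -- restricted nondegeneracy on any submodule
  have hres : ∀ W : Submodule ℝ g, (B.restrict W).Nondegenerate := by
    intro W
    constructor <;> intro x hx
    all_goals
      have := hx x
      simp only [LinearMap.BilinForm.restrict_apply] at this
      have hx0 : (x : g) = 0 := hanis _ this
      exact Subtype.ext hx0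
  have hcomplV : IsCompl h.toSubmodule V := by
    rw [hV]
    exact LinearMap.BilinForm.isCompl_orthogonal_of_restrict_nondegenerate hrefl (hres _)
  have hcomplm : IsCompl k.toSubmodule m := by
    rw [hm]
    exact LinearMap.BilinForm.isCompl_orthogonal_of_restrict_nondegenerate hrefl (hres _)
  -- memberships
  have hmV : m ≤ V := by
    intro x hx
    rw [hV, LinearMap.BilinForm.mem_orthogonal_iff]
    intro n hn
    rw [hm, LinearMap.BilinForm.mem_orthogonal_iff] at hx
    exact hx n (hhk hn)
  have hlV : l ≤ V := by
    intro x hx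
    rw [hl] at hx
    rw [hV]
    exact hx.2
  have hlk : l ≤ k.toSubmodule := by
    intro x hx
    rw [hl] at hx
    exact hx.1
  -- B n x = 0 for n ∈ h, x ∈ V
  have horthV : ∀ n ∈ h, ∀ x ∈ V, B n x = 0 := by
    intro n hn x hx
    rw [hV, LinearMap.BilinForm.mem_orthogonal_iff] at hx
    exact hx n hn
  have horthm : ∀ n ∈ k.toSubmodule, ∀ x ∈ m, B n x = 0 := by
    intro n hn x hx
    rw [hm, LinearMap.BilinForm.mem_orthogonal_iff] at hx
    exact hx n hn
  -- h-invariance of V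
  have hVmem : ∀ a ∈ h, ∀ x ∈ V, ⁅a, x⁆ ∈ V := by
    intro a ha x hx
    rw [hV, LinearMap.BilinForm.mem_orthogonal_iff]
    intro n hn
    show B n ⁅a, x⁆ = 0
    rw [hsymm, hinv]
    have : B ⁅a, n⁆ x = 0 := horthV _ (h.lie_mem ha hn) x hx
    rw [hsymm] at this
    rw [this, neg_zero]
  -- k-invariance of m
  have hmmem : ∀ y ∈ k, ∀ x ∈ m, ⁅y, x⁆ ∈ m := by
    intro y hy x hx
    rw [hm, LinearMap.BilinForm.mem_orthogonal_iff]
    intro n hn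
    show B n ⁅y, x⁆ = 0
    rw [hsymm, hinv]
    have : B ⁅y, n⁆ x = 0 := horthm _ (k.lie_mem hy hn) x hx
    rw [hsymm] at this
    rw [this, neg_zero]
  -- existence of decompositions
  have hdecompV : ∀ x ∈ V, ∃ xl ∈ l, ∃ xm ∈ m, x = xl + xm := by
    intro x hx
    obtain ⟨xk, xm, hxk, hxm, hsum⟩ :=
      Submodule.codisjoint_iff_exists_add_eq.mp hcomplm.codisjoint x
    refine ⟨xk, ?_, xm, hxm, hsum.symm⟩
    rw [hl]
    refine ⟨hxk, ?_⟩
    have : xk = x - xm := by rw [← hsum]; abel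
    rw [← hV]
    rw [this]
    exact Submodule.sub_mem V hx (hmV hxm)
  have hdecomp : ∀ z : g, ∃ zh ∈ h.toSubmodule, ∃ zl ∈ l, ∃ zm ∈ m, z = zh + zl + zm := by
    intro z
    obtain ⟨zk, zm, hzk, hzm, hsum⟩ :=
      Submodule.codisjoint_iff_exists_add_eq.mp hcomplm.codisjoint z
    obtain ⟨zh, zv, hzh, hzv, hsum2⟩ :=
      Submodule.codisjoint_iff_exists_add_eq.mp hcomplV.codisjoint zk
    refine ⟨zh, hzh, zv, ?_, zm, hzm, by rw [← hsum, ← hsum2]⟩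
    rw [hl]
    refine ⟨?_, by rw [← hV]; exact hzv⟩
    have : zv = zk - zh := by rw [← hsum2]; abel
    rw [this]
    exact Submodule.sub_mem k.toSubmodule hzk (hhk hzh)
  -- main loop
  intro lam hlam X hX
  obtain ⟨a, ha, hGOa⟩ := hGO0 X hX
  obtain ⟨xl, hxl, xm, hxm, hXeq⟩ := hdecompV X hX
  -- main computation: for any F and any decomposition of ⁅X+F, Y⁆,
  -- c * B zl X + B zm X = - B Y (c • ⁅X+F, xl⁆ + ⁅X+F, xm⁆)
  have hcomp : ∀ (F Y zh zl zm : g), zh ∈ h.toSubmodule → zl ∈ l → zm ∈ m →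
      ⁅X + F, Y⁆ = zh + zl + zm → ∀ c : ℝ,
      c * B zl X + B zm X = -B Y (c • ⁅X + F, xl⁆ + ⁅X + F, xm⁆) := by
    intro F Y zh zl zm hzh hzl hzm heq c
    have hzlX : B zl X = B ⁅X + F, Y⁆ xl := by
      have e1 : B zl X = B zl xl := by
        rw [hXeq, map_add, horthm zl (hlk hzl) xm hxm, add_zero]
      have h2 : B zh xl = 0 := horthV zh hzh xl (hlV hxl)
      have h3 : B zm xl = 0 := by
        rw [hsymm]; exact horthm xl (hlk hxl) zm hzm
      rw [e1, heq]
      simp only [map_add, LinearMap.add_apply]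
      rw [h2, h3]; ring
    have hzmX : B zm X = B ⁅X + F, Y⁆ xm := by
      have h1 : B zm xl = 0 := by
        rw [hsymm]; exact horthm xl (hlk hxl) zm hzm
      have e1 : B zm X = B zm xm := by
        rw [hXeq, map_add, h1, zero_add]
      have h2 : B zh xm = 0 := horthV zh hzh xm (hmV hxm)
      have h3 : B zl xm = 0 := horthm zl (hlk hzl) xm hxm
      rw [e1, heq]
      simp only [map_add, LinearMap.add_apply]
      rw [h2, h3]; ring
    rw [hzlX, hzmX, hinv (X + F) Y xl, hinv (X + F) Y xm, map_add, map_smul]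
    simp only [smul_eq_mul]
    ring
  -- Step 1: extract the bracket relations from hGO0
  have hp : (⁅a, xl⁆ : g) ∈ l := by
    rw [hl]
    exact ⟨k.lie_mem (hhk ha) (hlk hxl), by rw [← hV]; exact hVmem a ha xl (hlV hxl)⟩
  have hq1 : (⁅xl, xm⁆ : g) ∈ m := hmmem xl (hlk hxl) xm hxm
  have hq2 : (⁅a, xm⁆ : g) ∈ m := hmmem a (hhk ha) xm hxm
  have hbl : ∀ F : g, ⁅X + F, xl⁆ = ⁅xm, xl⁆ + ⁅F, xl⁆ := by
    intro F
    rw [hXeq]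
    simp [add_lie, lie_self]
  have hbm : ∀ F : g, ⁅X + F, xm⁆ = ⁅xl, xm⁆ + ⁅F, xm⁆ := by
    intro F
    rw [hXeq]
    simp [add_lie, lie_self]
  -- the vector w := lam0 • ⁅X+a, xl⁆ + ⁅X+a, xm⁆ is B-orthogonal to all of V
  set w : g := lam0 • ⁅X + a, xl⁆ + ⁅X + a, xm⁆ with hw
  have hworth : ∀ Y ∈ V, B Y w = 0 := by
    intro Y hY
    obtain ⟨zh, hzh, zl, hzl, zm, hzm, heq⟩ := hdecomp ⁅X + a, Y⁆
    have := hGOa Y hY zh hzh zl hzl zm hzm heq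
    have h2 := hcomp a Y zh zl zm hzh hzl hzm heq lam0
    rw [this] at h2
    rw [hw]
    linarith [h2]
  have hwV : w ∈ V := by
    rw [hw, hbl, hbm]
    have m1 : (⁅xm, xl⁆ : g) ∈ m := by
      have := hmmem xl (hlk hxl) xm hxm
      rw [← lie_skew]
      exact Submodule.neg_mem m this
    refine Submodule.add_mem V (Submodule.smul_mem V lam0 ?_) ?_
    · exact Submodule.add_mem V (hmV m1) (hlV hp)
    · exact Submodule.add_mem V (hmV hq1) (hmV hq2)
  have hwzero : w = 0 := hanis w (hworth w hwV)
  -- split w = p + q with p ∈ l, q ∈ m and conclude p = q = 0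
  have hweq : w = lam0 • ⁅a, xl⁆ + (lam0 • ⁅xm, xl⁆ + (⁅xl, xm⁆ + ⁅a, xm⁆)) := by
    rw [hw, hbl, hbm]
    module
  have hpmem : (lam0 • ⁅a, xl⁆ : g) ∈ l := Submodule.smul_mem l lam0 hp
  have hqmem : (lam0 • ⁅xm, xl⁆ + (⁅xl, xm⁆ + ⁅a, xm⁆) : g) ∈ m := by
    have m1 : (⁅xm, xl⁆ : g) ∈ m := by
      rw [← lie_skew]
      exact Submodule.neg_mem m hq1
    exact Submodule.add_mem m (Submodule.smul_mem m lam0 m1) (Submodule.add_mem m hq1 hq2)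
  have hlm : ∀ x ∈ l, x ∈ m → x = 0 := by
    intro x hx1 hx2
    exact hanis x (horthm x (hlk hx1) x hx2)
  have hpzero : (lam0 • ⁅a, xl⁆ : g) = 0 := by
    apply hlm _ hpmem
    have : (lam0 • ⁅a, xl⁆ : g) = -(lam0 • ⁅xm, xl⁆ + (⁅xl, xm⁆ + ⁅a, xm⁆)) := by
      have := hwzero
      rw [hweq] at this
      linear_combination (norm := module) this
    rw [this]
    exact Submodule.neg_mem m hqmem
  have haxl : (⁅a, xl⁆ : g) = 0 := by
    have hne : lam0 ≠ 0 := ne_of_gt hlam0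
    have := smul_eq_zero.mp hpzero
    tauto
  have hqzero : (lam0 • ⁅xm, xl⁆ + (⁅xl, xm⁆ + ⁅a, xm⁆) : g) = 0 := by
    have := hwzero
    rw [hweq, hpzero, zero_add] at this
    exact this
  -- i.e. ⁅a, xm⁆ = (lam0 - 1) • ⁅xl, xm⁆
  have haxm : (⁅a, xm⁆ : g) = (lam0 - 1) • ⁅xl, xm⁆ := by
    have hskew : (⁅xm, xl⁆ : g) = -⁅xl, xm⁆ := by rw [← lie_skew]
    rw [hskew] at hqzero
    linear_combination (norm := module) hqzero
  -- Step 2: take F := ((lam - 1)/(lam0 - 1)) • a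
  set t : ℝ := (lam - 1) / (lam0 - 1) with ht
  refine ⟨t • a, h.smul_mem t ha, ?_⟩
  intro Y hY zh hzh zl hzl zm hzm heq
  have h2 := hcomp (t • a) Y zh zl zm hzh hzl hzm heq lam
  have hvec : lam • ⁅X + t • a, xl⁆ + ⁅X + t • a, xm⁆ = 0 := by
    rw [hbl, hbm, smul_lie, smul_lie, haxl, haxm]
    have hskew : (⁅xm, xl⁆ : g) = -⁅xl, xm⁆ := by rw [← lie_skew]
    rw [hskew]
    have htval : t * (lam0 - 1) = lam - 1 := by
      rw [ht]
      field_simp [sub_ne_zero.mpr hlam0ne]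
    have : t • ((lam0 - 1) • (⁅xl, xm⁆ : g)) = (lam - 1) • ⁅xl, xm⁆ := by
      rw [smul_smul, htval]
    rw [smul_zero, this]
    module
  rw [h2, hvec, map_zero, neg_zero]
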